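/- Suppose real numbers s, n, u, x₀, h, Γ satisfy the three integral relations A n + kμ cos(u) = kμ x₀, P(s² + τ²) + A n² = 2h, and P²(s² + τ²) + A²n² + k² − 2k(P s sin(u) − A n cos(u)) = Γ² (for some real τ). Then, with x = cos(u), b₀ = Iμ + 2A, b₁ = Iμ + A, b₂ = 2PA, and Γ̄ = (I k²μ²x₀² + A(Γ² − k²) − 2hPA)/(μ k²), the elimination identity b₂ · s · sin(u) = kμ · (−b₀ x² + 2 b₁ x₀ x − Γ̄) holds. -/

import Mathlib

open Real

/-- Elimination of `τ` from the first integrals of Demchenko's system: if the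
gyroscopic integral, the kinetic energy integral and the area integral hold, then
`b₂ s sin u = kμ(−b₀ x² + 2b₁ x₀ x − Γ̄)`, where `x = cos u`, `I = P − A`,
`b₀ = Iμ + 2A`, `b₁ = Iμ + A`, `b₂ = 2PA`, and
`Γ̄ = (I k²μ²x₀² + A(Γ² − k²) − 2hPA)/(μk²)`. -/
theorem demchenko_elimination_identity
    (A P k μ s n u x₀ h Γ τ : ℝ)
    (hA : 0 < A) (hP : A < P) (hk : k ≠ 0) (hμ : 1 < μ)
    (h1 : A * n + k * μ * Real.cos u = k * μ * x₀)
    (h2 : P * (s ^ 2 + τ ^ 2) + A * n ^ 2 = 2 * h)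
    (h3 : P ^ 2 * (s ^ 2 + τ ^ 2) + A ^ 2 * n ^ 2 + k ^ 2
        - 2 * k * (P * s * Real.sin u - A * n * Real.cos u) = Γ ^ 2) :
    2 * P * A * s * Real.sin u
      = k * μ * (-((P - A) * μ + 2 * A) * Real.cos u ^ 2
          + 2 * ((P - A) * μ + A) * x₀ * Real.cos u
          - ((P - A) * k ^ 2 * μ ^ 2 * x₀ ^ 2 + A * (Γ ^ 2 - k ^ 2) - 2 * h * P * A)
              / (μ * k ^ 2)) := by
  have hμ0 : μ ≠ 0 := by positivity
  field_simp
  linear_combination (A*P) * h2 - (A) * h3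
    + ((-(P-A)*(A*n + k*μ*(x₀ - Real.cos u)) + 2*k*A*Real.cos u)) * h1
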